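/- Let X₁, X₂, …, X_n be i.i.d. standard Gaussian random variables and let k be an integer with 1 ≤ k and n ≥ 2k + 1. Set n_k := n − k and p̂⁰_k := (1/n_k) Σ_{j=1}^{n_k} 1(X_j > 0, X_{j+k} > 0). Then E[p̂⁰_k] = 1/4 (so p̂⁰_k is an unbiased estimator of p_k := P(X_1 > 0, X_{1+k} > 0) = 1/4), and Var(p̂⁰_k) = 5/(16 n_k) − k/(8 n_k²) exactly; equivalently E[(p̂⁰_k)²] = 1/16 + 5/(16 n_k) − k/(8 n_k²). -/

import Mathlib

open MeasureTheory ProbabilityTheory Filter Real Set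

lemma gauss_half' : (gaussianReal 0 1) (Set.Ioi (0:ℝ)) = 1/2 := by
  set ν := gaussianReal 0 1 with hν
  have hmap : ν.map (fun x => (-1 : ℝ) * x) = ν := by
    rw [hν, show (fun x => (-1:ℝ) * x) = ((-1 : ℝ) * ·) from rfl, gaussianReal_map_const_mul]
    norm_num
  have h0 : ν {(0:ℝ)} = 0 := by
    rw [hν, gaussianReal_apply 0 one_ne_zero,
      setLIntegral_measure_zero _ _ (measure_singleton 0)]
  have hIio : ν (Set.Iio 0) = ν (Set.Ioi 0) := by
    conv_lhs => rw [← hmap]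
    rw [Measure.map_apply (by fun_prop) measurableSet_Iio]
    congr 1; ext x; simp
  have hIci : ν (Set.Ici 0) = ν (Set.Ioi 0) := by
    rw [show Set.Ici (0:ℝ) = {0} ∪ Set.Ioi 0 by ext x; simp [le_iff_lt_or_eq, or_comm],
      measure_union (by simp) measurableSet_Ioi, h0, zero_add]
  have hsplit : ν (Set.Iio 0) + ν (Set.Ici 0) = 1 := by
    rw [← measure_union (Set.Iio_disjoint_Ici le_rfl) measurableSet_Ici,
      Set.Iio_union_Ici, measure_univ]
  rw [hIio, hIci, ← two_mul] at hsplit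
  rw [ENNReal.eq_div_iff (by norm_num) (by norm_num), hsplit]

theorem pHat_iid_mean_and_variance
    {Ω : Type*} [MeasurableSpace Ω] (μ : Measure Ω) [IsProbabilityMeasure μ]
    (X : ℕ → Ω → ℝ)
    (hXmeas : ∀ i, Measurable (X i))
    (hXlaw : ∀ i, μ.map (X i) = gaussianReal 0 1)
    (hindep : iIndepFun X μ)
    (k n : ℕ) (hk : 1 ≤ k) (hn : 2 * k + 1 ≤ n)
    (phat : Ω → ℝ)
    (hphat : phat = fun ω => (1 / ((n : ℝ) - k)) *
      ∑ j ∈ Finset.Icc 1 (n - k), (if 0 < X j ω ∧ 0 < X (j + k) ω then (1 : ℝ) else 0)) :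
    (μ {ω | 0 < X 1 ω ∧ 0 < X (1 + k) ω}).toReal = 1 / 4 ∧
    (∫ ω, phat ω ∂μ) = 1 / 4 ∧
    (∫ ω, (phat ω) ^ 2 ∂μ) =
      1 / 16 + 5 / (16 * ((n : ℝ) - k)) - k / (8 * ((n : ℝ) - k) ^ 2) ∧
    variance phat μ = 5 / (16 * ((n : ℝ) - k)) - k / (8 * ((n : ℝ) - k) ^ 2) := by
  have hkm : k + 1 ≤ n - k := by omega
  set m : ℕ := n - k with hm
  have hmcast : ((m : ℝ)) = (n : ℝ) - k := by
    rw [hm, Nat.cast_sub (by omega)]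
  have hmpos : (0:ℝ) < (m:ℝ) := by exact_mod_cast Nat.lt_of_lt_of_le (by omega) hkm
  have hmne : ((m:ℝ)) ≠ 0 := ne_of_gt hmpos
  -- Step A : each X i is positive with probability 1/2
  have hhalf : ∀ i, μ (X i ⁻¹' Set.Ioi 0) = 1/2 := by
    intro i
    rw [← Measure.map_apply (hXmeas i) measurableSet_Ioi, hXlaw i, gauss_half']
  -- Step B : intersections
  have hInter : ∀ S : Finset ℕ, μ (⋂ i ∈ S, X i ⁻¹' Set.Ioi 0) = (1/2 : ENNReal) ^ S.card := by
    intro S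
    rw [hindep.measure_inter_preimage_eq_mul S (sets := fun _ => Set.Ioi 0)
      (fun i _ => measurableSet_Ioi)]
    simp [hhalf]
  -- Step C : events as intersections
  have hEventMeas : ∀ a b : ℕ, MeasurableSet {ω | 0 < X a ω ∧ 0 < X b ω} := by
    intro a b
    exact ((hXmeas a) measurableSet_Ioi).inter ((hXmeas b) measurableSet_Ioi)
  have hPair : ∀ a b : ℕ, a ≠ b → μ {ω | 0 < X a ω ∧ 0 < X b ω} = 1/4 := by
    intro a b hab
    rw [show {ω | 0 < X a ω ∧ 0 < X b ω} = ⋂ i ∈ ({a, b} : Finset ℕ), X i ⁻¹' Set.Ioi 0 by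
      ext ω; simp [Set.mem_iInter], hInter,
      Finset.card_insert_of_notMem (by simpa using hab), Finset.card_singleton,
      show ((1:ENNReal)/2)^2 = 1/4 by rw [one_div, one_div, ← ENNReal.inv_pow]; norm_num]
  -- the indicator functions
  have hIint : ∀ j : ℕ, Integrable (fun ω => if 0 < X j ω ∧ 0 < X (j + k) ω then (1:ℝ) else 0) μ := by
    intro j
    have h1 : (fun ω => if 0 < X j ω ∧ 0 < X (j + k) ω then (1:ℝ) else 0)
        = Set.indicator {ω | 0 < X j ω ∧ 0 < X (j+k) ω} (fun _ => (1:ℝ)) := by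
      ext ω; simp [Set.indicator_apply]
    rw [h1]
    exact (integrable_const 1).indicator (hEventMeas j (j+k))
  have hIexp : ∀ j : ℕ, ∫ ω, (if 0 < X j ω ∧ 0 < X (j + k) ω then (1:ℝ) else 0) ∂μ = 1/4 := by
    intro j
    have h1 : (fun ω => if 0 < X j ω ∧ 0 < X (j + k) ω then (1:ℝ) else 0)
        = Set.indicator {ω | 0 < X j ω ∧ 0 < X (j+k) ω} (fun _ => (1:ℝ)) := by
      ext ω; simp [Set.indicator_apply]
    rw [h1, integral_indicator_const _ (hEventMeas j (j+k)), measureReal_def, hPair j (j+k) (by omega)]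
    simp [ENNReal.toReal_div]
  -- mean
  have hmean : ∫ ω, phat ω ∂μ = 1/4 := by
    rw [hphat]
    rw [integral_const_mul, integral_finset_sum _ (fun j _ => hIint j),
      Finset.sum_congr rfl (fun j _ => hIexp j), Finset.sum_const, Nat.card_Icc]
    simp only [Nat.add_sub_cancel, nsmul_eq_mul, ← hm, ← hmcast]
    field_simp
  -- products of indicators
  have hQuadMeas : ∀ j l : ℕ, MeasurableSet
      {ω | (0 < X j ω ∧ 0 < X (j+k) ω) ∧ (0 < X l ω ∧ 0 < X (l+k) ω)} := by
    intro j l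
    exact (hEventMeas j (j+k)).inter (hEventMeas l (l+k))
  have hQuad : ∀ j l : ℕ, μ {ω | (0 < X j ω ∧ 0 < X (j+k) ω) ∧ (0 < X l ω ∧ 0 < X (l+k) ω)}
      = (1/2 : ENNReal) ^ (({j, j+k, l, l+k} : Finset ℕ).card) := by
    intro j l
    rw [← hInter]
    congr 1
    ext ω
    simp only [Set.mem_iInter, Set.mem_preimage, Set.mem_Ioi, Finset.mem_insert,
      Finset.mem_singleton, Set.mem_setOf_eq]
    constructor
    · rintro ⟨⟨h1, h2⟩, h3, h4⟩ i hi
      rcases hi with rfl | rfl | rfl | rfl <;> assumption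
    · intro h
      exact ⟨⟨h j (by tauto), h (j+k) (by tauto)⟩, h l (by tauto), h (l+k) (by tauto)⟩
  have hProdEq : ∀ j l : ℕ, (fun ω => (if 0 < X j ω ∧ 0 < X (j + k) ω then (1:ℝ) else 0) *
      (if 0 < X l ω ∧ 0 < X (l + k) ω then (1:ℝ) else 0))
      = Set.indicator {ω | (0 < X j ω ∧ 0 < X (j+k) ω) ∧ (0 < X l ω ∧ 0 < X (l+k) ω)}
        (fun _ => (1:ℝ)) := by
    intro j l
    ext ω
    by_cases h1 : 0 < X j ω ∧ 0 < X (j + k) ω <;>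
      by_cases h2 : 0 < X l ω ∧ 0 < X (l + k) ω <;>
      simp [h1, h2, Set.indicator_apply]
  have hProdInt : ∀ j l : ℕ, Integrable (fun ω =>
      (if 0 < X j ω ∧ 0 < X (j + k) ω then (1:ℝ) else 0) *
      (if 0 < X l ω ∧ 0 < X (l + k) ω then (1:ℝ) else 0)) μ := by
    intro j l
    rw [hProdEq j l]
    exact (integrable_const 1).indicator (hQuadMeas j l)
  have hProdExp : ∀ j l : ℕ, ∫ ω, (if 0 < X j ω ∧ 0 < X (j + k) ω then (1:ℝ) else 0) *
      (if 0 < X l ω ∧ 0 < X (l + k) ω then (1:ℝ) else 0) ∂μ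
      = ((1:ℝ)/2) ^ (({j, j+k, l, l+k} : Finset ℕ).card) := by
    intro j l
    rw [show (fun ω => (if 0 < X j ω ∧ 0 < X (j + k) ω then (1:ℝ) else 0) *
      (if 0 < X l ω ∧ 0 < X (l + k) ω then (1:ℝ) else 0)) = _ from hProdEq j l,
      integral_indicator_const _ (hQuadMeas j l), measureReal_def, hQuad j l]
    simp [ENNReal.toReal_pow, ENNReal.toReal_div]
  -- value of the power by cases
  have hval : ∀ j ∈ Finset.Icc 1 m, ∀ l ∈ Finset.Icc 1 m,
      ((1:ℝ)/2) ^ (({j, j+k, l, l+k} : Finset ℕ).card)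
      = 1/16 + (if j = l then (3/16:ℝ) else 0) + (if l = j + k then (1/16:ℝ) else 0)
        + (if j = l + k then (1/16:ℝ) else 0) := by
    intro j _ l _
    rcases eq_or_ne j l with rfl | hjl
    · rw [show ({j, j+k, j, j+k} : Finset ℕ) = {j, j+k} by ext x; simp,
        Finset.card_insert_of_notMem (by simp; omega), Finset.card_singleton]
      simp only [if_pos rfl, if_neg (by omega : ¬ j = j + k),
        if_neg (by omega : ¬ j = j + k)]
      norm_num
    · rcases eq_or_ne l (j + k) with rfl | hl1
      · rw [show ({j, j+k, j+k, j+k+k} : Finset ℕ) = {j, j+k, j+k+k} by ext x; simp,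
          Finset.card_insert_of_notMem (by simp; omega),
          Finset.card_insert_of_notMem (by simp; omega), Finset.card_singleton]
        simp only [if_neg hjl, if_pos rfl, if_neg (by omega : ¬ j = j + k + k)]
        norm_num
      · rcases eq_or_ne j (l + k) with rfl | hj1
        · rw [show ({l+k, l+k+k, l, l+k} : Finset ℕ) = {l, l+k, l+k+k} by
            ext x; simp; tauto,
            Finset.card_insert_of_notMem (by simp; omega),
            Finset.card_insert_of_notMem (by simp; omega), Finset.card_singleton]
          simp only [if_neg hjl, if_neg hl1, if_pos rfl]
          norm_num
        · rw [Finset.card_insert_of_notMem (by simp; omega),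
            Finset.card_insert_of_notMem (by simp; omega),
            Finset.card_insert_of_notMem (by simp; omega), Finset.card_singleton]
          simp only [if_neg hjl, if_neg hl1, if_neg hj1]
          norm_num
  -- counting sums
  have hcount : ∑ j ∈ Finset.Icc 1 m, (if j + k ∈ Finset.Icc 1 m then (1/16:ℝ) else 0)
      = ((m - k : ℕ) : ℝ) * (1/16) := by
    have h1 : ∀ j ∈ Finset.Icc 1 m, (if j + k ∈ Finset.Icc 1 m then (1/16:ℝ) else 0)
        = (if j ∈ Finset.Icc 1 (m - k) then (1/16:ℝ) else 0) := by
      intro j hj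
      refine if_congr ?_ rfl rfl
      simp only [Finset.mem_Icc] at *
      omega
    rw [Finset.sum_congr rfl h1, Finset.sum_ite_mem,
      Finset.inter_eq_right.mpr (Finset.Icc_subset_Icc_right (by omega)),
      Finset.sum_const, Nat.card_Icc]
    simp [nsmul_eq_mul]
  -- second moment
  have hsecond : ∫ ω, (phat ω) ^ 2 ∂μ =
      1 / 16 + 5 / (16 * ((n : ℝ) - k)) - k / (8 * ((n : ℝ) - k) ^ 2) := by
    have hsq : ∀ ω, (phat ω) ^ 2 = (1 / ((n : ℝ) - k))^2 *
        ∑ j ∈ Finset.Icc 1 m, ∑ l ∈ Finset.Icc 1 m,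
          ((if 0 < X j ω ∧ 0 < X (j + k) ω then (1:ℝ) else 0) *
           (if 0 < X l ω ∧ 0 < X (l + k) ω then (1:ℝ) else 0)) := by
      intro ω
      rw [hphat]
      simp only []
      rw [mul_pow]
      congr 1
      rw [sq, Finset.sum_mul_sum]
    rw [integral_congr_ae (Filter.Eventually.of_forall hsq)]
    rw [integral_const_mul,
      integral_finset_sum _ (fun j _ => integrable_finset_sum _ (fun l _ => hProdInt j l))]
    rw [Finset.sum_congr rfl (fun j hj => integral_finset_sum _ (fun l _ => hProdInt j l))]
    rw [Finset.sum_congr rfl (fun j hj => Finset.sum_congr rfl (fun l hl => hProdExp j l))]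
    rw [Finset.sum_congr rfl (fun j hj => Finset.sum_congr rfl (fun l hl => hval j hj l hl))]
    have T1 : ∑ _j ∈ Finset.Icc 1 m, ∑ _l ∈ Finset.Icc 1 m, ((1:ℝ)/16)
        = (m:ℝ) * m * (1/16) := by
      simp [Finset.sum_const, Nat.card_Icc, nsmul_eq_mul]
      ring
    have T2 : ∑ j ∈ Finset.Icc 1 m, ∑ l ∈ Finset.Icc 1 m, (if j = l then (3/16:ℝ) else 0)
        = (m:ℝ) * (3/16) := by
      rw [Finset.sum_congr rfl
        (fun j _ => Finset.sum_ite_eq (Finset.Icc 1 m) j (fun _ => (3/16:ℝ))),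
        Finset.sum_congr rfl (fun j hj => if_pos hj), Finset.sum_const, Nat.card_Icc]
      simp [nsmul_eq_mul]
    have T3 : ∑ j ∈ Finset.Icc 1 m, ∑ l ∈ Finset.Icc 1 m, (if l = j + k then (1/16:ℝ) else 0)
        = ((m - k : ℕ) : ℝ) * (1/16) := by
      rw [Finset.sum_congr rfl
        (fun j _ => Finset.sum_ite_eq' (Finset.Icc 1 m) (j + k) (fun _ => (1/16:ℝ))), hcount]
    have T4 : ∑ j ∈ Finset.Icc 1 m, ∑ l ∈ Finset.Icc 1 m, (if j = l + k then (1/16:ℝ) else 0)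
        = ((m - k : ℕ) : ℝ) * (1/16) := by
      rw [Finset.sum_comm, Finset.sum_congr rfl
        (fun l _ => Finset.sum_ite_eq' (Finset.Icc 1 m) (l + k) (fun _ => (1/16:ℝ))), hcount]
    simp only [Finset.sum_add_distrib]
    rw [T1, T2, T3, T4]
    have hmk : ((m - k : ℕ) : ℝ) = (m:ℝ) - k := by
      rw [Nat.cast_sub (by omega)]
    rw [hmk, ← hmcast]
    field_simp
    ring
  refine ⟨by rw [hPair 1 (1+k) (by omega)]; simp [ENNReal.toReal_div], hmean, hsecond, ?_⟩
  -- variance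
  have hmeas : Measurable phat := by
    rw [hphat]
    exact measurable_const.mul (Finset.measurable_sum _ (fun j _ =>
      Measurable.ite (hEventMeas j (j+k)) measurable_const measurable_const))
  have hbound : ∀ ω, |phat ω| ≤ |1/((n:ℝ)-k)| * m := by
    intro ω
    rw [hphat]
    simp only [abs_mul]
    refine mul_le_mul_of_nonneg_left ?_ (abs_nonneg _)
    calc |∑ j ∈ Finset.Icc 1 m, (if 0 < X j ω ∧ 0 < X (j + k) ω then (1:ℝ) else 0)|
        ≤ ∑ j ∈ Finset.Icc 1 m, |(if 0 < X j ω ∧ 0 < X (j + k) ω then (1:ℝ) else 0)| :=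
          Finset.abs_sum_le_sum_abs _ _
      _ ≤ ∑ j ∈ Finset.Icc 1 m, (1:ℝ) := Finset.sum_le_sum (fun i _ => by split_ifs <;> simp)
      _ = (m:ℝ) := by simp [Nat.card_Icc]
  have hmem : MemLp phat 2 μ :=
    memLp_of_bounded (Filter.Eventually.of_forall
      (fun ω => Set.mem_Icc.mpr (abs_le.mp (hbound ω)))) hmeas.aestronglyMeasurable 2
  rw [variance_eq_sub hmem]
  simp only [Pi.pow_apply]
  rw [hsecond, hmean]
  ring
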